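/- For i ≥ 1, the sets A_i = ∪_{j=0}^{2^{i-1}-1} T^{-j}[0, 2^{-2i-1}) and B_i = ∪_{j=2^{i-1}}^{2^i-1} T^{-j}[0, 2^{-2i-1}) are each disjoint unions, and μ(A_i) = μ(B_i) = 2^{-i-2}, where μ is Lebesgue measure. -/

import Mathlib

open MeasureTheory

noncomputable def binDigit (i : ℕ) (r : ℝ) : ℤ := ⌊r * 2 ^ i⌋ % 2

noncomputable def binTau (r : ℝ) : ℕ := sInf {i | 0 < i ∧ binDigit i r = 1}

/-- The binary odometer `T r = r - 2^{-τ(r)} + ∑_{l=1}^{τ(r)-1} 2^{-l}`. -/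
noncomputable def TOdo (r : ℝ) : ℝ :=
  r - (2 : ℝ)⁻¹ ^ binTau r + ∑ l ∈ Finset.Icc 1 (binTau r - 1), (2 : ℝ)⁻¹ ^ l

/-- `Jset i j = [0,1) ∩ T^{-j} [0, 2^{-(2i+1)})`, i.e. the part of the `j`-th
preimage of `I_0^{2i+1}` inside the unit interval. -/
noncomputable def Jset (i j : ℕ) : Set ℝ :=
  Set.Ico (0 : ℝ) 1 ∩ (TOdo^[j] ⁻¹' Set.Ico (0 : ℝ) ((2 : ℝ)⁻¹ ^ (2 * i + 1)))

/-- `A_0 = ∅`, and for `i ≥ 1`, `A_i = ⋃_{j=0}^{2^{i-1}-1} T^{-j} [0, 2^{-2i-1})`. -/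
noncomputable def Aset : ℕ → Set ℝ
  | 0 => ∅
  | i + 1 => ⋃ j ∈ Finset.range (2 ^ i), Jset (i + 1) j

/-- `B_0 = [0, 1/4)`, and for `i ≥ 1`, `B_i = ⋃_{j=2^{i-1}}^{2^i-1} T^{-j} [0, 2^{-2i-1})`. -/
noncomputable def Bset : ℕ → Set ℝ
  | 0 => Set.Ico (0 : ℝ) (1 / 4)
  | i + 1 => ⋃ j ∈ Finset.Ico (2 ^ i) (2 ^ (i + 1)), Jset (i + 1) j

/-- `C_i = A_i ∪ B_i`. -/
noncomputable def Cset (i : ℕ) : Set ℝ := Aset i ∪ Bset i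

/-- `C = ⋃_{i ≥ 0} C_i`. -/
noncomputable def CsetAll : Set ℝ := ⋃ i, Cset i

/-- For `i ≥ 1`: the sets `T^{-j}[0,2^{-2i-1})` (within `[0,1)`) for
`0 ≤ j < 2^i` are pairwise disjoint, so `A_i` and `B_i` are disjoint unions,
and `μ(A_i) = μ(B_i) = 2^{-i-2}`. -/

noncomputable def vfun (n : ℕ) (r : ℝ) : ℕ :=
  ∑ l ∈ Finset.range n, (binDigit (l+1) r).toNat * 2 ^ l

lemma digit01 (i : ℕ) (r : ℝ) : binDigit i r = 0 ∨ binDigit i r = 1 := by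
  unfold binDigit; omega

-- floor of r*2^m is zero if all digits up to m vanish
lemma floor_zero (r : ℝ) (hr0 : 0 ≤ r) (hr1 : r < 1) (m : ℕ)
    (h : ∀ l, 0 < l → l ≤ m → binDigit l r = 0) : ⌊r * 2 ^ m⌋ = 0 := by
  induction m with
  | zero => simpa using Int.floor_eq_zero_iff.2 ⟨hr0, by simpa using hr1⟩
  | succ m ih =>
    have h0 : ⌊r * 2 ^ m⌋ = 0 := ih (fun l hl hlm => h l hl (hlm.trans (Nat.le_succ m)))
    have hb1 : r * 2 ^ m < 1 := by
      have := Int.lt_floor_add_one (r * 2 ^ m); rw [h0] at this; simpa using this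
    have hb2 : 0 ≤ r * 2 ^ m := by positivity
    have hc2 : r * 2 ^ (m+1) < 2 := by
      rw [pow_succ]; rw [← mul_assoc]; nlinarith
    have hc1 : 0 ≤ r * 2 ^ (m+1) := by positivity
    have : ⌊r * 2 ^ (m+1)⌋ = 0 ∨ ⌊r * 2 ^ (m+1)⌋ = 1 := by
      have l1 : (0:ℤ) ≤ ⌊r * 2 ^ (m+1)⌋ := Int.floor_nonneg.2 hc1
      have l2 : ⌊r * 2 ^ (m+1)⌋ < 2 := by
        have := Int.floor_le (r * 2 ^ (m+1)); exact_mod_cast Int.floor_lt.2 (by exact_mod_cast hc2)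
      omega
    rcases this with h' | h'
    · exact h'
    · exfalso
      have := h (m+1) (Nat.succ_pos m) le_rfl
      unfold binDigit at this; rw [h'] at this; norm_num at this



lemma tau_spec (r : ℝ) (hr0 : 0 < r) (hr1 : r < 1) :
    0 < binTau r ∧ binDigit (binTau r) r = 1 ∧
      ∀ l, 0 < l → l < binTau r → binDigit l r = 0 := by
  have hne : {i | 0 < i ∧ binDigit i r = 1}.Nonempty := by
    by_contra h
    rw [Set.not_nonempty_iff_eq_empty] at h
    have hall : ∀ l, 0 < l → binDigit l r = 0 := by
      intro l hl
      rcases digit01 l r with h0 | h1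
      · exact h0
      · exfalso
        rw [Set.eq_empty_iff_forall_notMem] at h
        exact h l ⟨hl, h1⟩
    obtain ⟨m, hm⟩ := exists_pow_lt_of_lt_one hr0 (by norm_num : (1:ℝ)/2 < 1)
    have h0 : ⌊r * 2 ^ m⌋ = 0 := floor_zero r hr0.le hr1 m (fun l hl _ => hall l hl)
    have : r * 2 ^ m < 1 := by
      have := Int.lt_floor_add_one (r * 2 ^ m); rw [h0] at this; simpa using this
    have h2 : (0:ℝ) < 2 ^ m := by positivity
    have : r < (1/2) ^ m := by
      rw [div_pow, one_pow]; rw [lt_div_iff₀ h2]; linarith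
    linarith
  have hmem := Nat.sInf_mem hne
  refine ⟨hmem.1, hmem.2, fun l hl hlt => ?_⟩
  rcases digit01 l r with h0 | h1
  · exact h0
  · have : binTau r ≤ l := Nat.sInf_le (⟨hl, h1⟩ : l ∈ {i | 0 < i ∧ binDigit i r = 1})
    omega

lemma geom_sum_half (m : ℕ) :
    ∑ l ∈ Finset.Icc 1 m, (2 : ℝ)⁻¹ ^ l = 1 - (2:ℝ)⁻¹ ^ m := by
  induction m with
  | zero => simp
  | succ m ih =>
    rw [Finset.sum_Icc_succ_top (by omega), ih]
    rw [pow_succ]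
    ring

lemma x_bounds (x : ℝ) (h0 : 0 < x) (h1 : x < 1) :
    (2:ℝ)⁻¹ ^ binTau x ≤ x ∧ x < (2:ℝ)⁻¹ ^ (binTau x - 1) := by
  obtain ⟨ht, hd, hz⟩ := tau_spec x h0 h1
  set t := binTau x with htdef
  have hfl : ⌊x * 2 ^ (t-1)⌋ = 0 := floor_zero x h0.le h1 (t-1) (fun l hl hlm => hz l hl (by omega))
  have hub : x * 2 ^ (t-1) < 1 := by
    have := Int.lt_floor_add_one (x * 2 ^ (t-1)); rw [hfl] at this; simpa using this
  have h2 : (0:ℝ) < 2 ^ (t-1) := by positivity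
  have hx2 : x < (2:ℝ)⁻¹ ^ (t-1) := by
    rw [inv_pow, inv_eq_one_div, lt_div_iff₀ h2]
    linarith

  constructor
  · -- x ≥ 2⁻¹^t : from digit t = 1
    have hsplit : (t - 1) + 1 = t := by omega
    have hx2' : x * 2 ^ t < 2 := by
      have : (2:ℝ)^t = 2^(t-1) * 2 := by rw [← pow_succ, hsplit]
      rw [this]
      calc x * (2^(t-1) * 2) = (x * 2^(t-1)) * 2 := by ring
        _ < 1 * 2 := by linarith
        _ = 2 := by ring
    have hge : (1:ℤ) ≤ ⌊x * 2 ^ t⌋ := by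
      unfold binDigit at hd
      have l1 : (0:ℤ) ≤ ⌊x * 2 ^ t⌋ := Int.floor_nonneg.2 (by positivity)
      have l2 : ⌊x * 2 ^ t⌋ < 2 := Int.floor_lt.2 (by exact_mod_cast hx2')
      omega
    have : (1:ℝ) ≤ x * 2 ^ t := by
      have h' := Int.floor_le (x * 2 ^ t)
      have h2' : ((1:ℤ):ℝ) ≤ (⌊x * 2 ^ t⌋ : ℝ) := by exact_mod_cast hge
      push_cast at h2'
      linarith
    rw [inv_pow, inv_le_iff_one_le_mul₀ (by positivity)]
    linarith [this]
  · exact hx2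

lemma T_eq (x : ℝ) : TOdo x = x - (2:ℝ)⁻¹ ^ binTau x + (1 - (2:ℝ)⁻¹ ^ (binTau x - 1)) := by
  unfold TOdo; rw [geom_sum_half]

lemma T_step (x : ℝ) (h0 : 0 < x) (h1 : x < 1) :
    (1 - (2:ℝ)⁻¹ ^ (binTau x - 1) ≤ TOdo x ∧ TOdo x < 1 - (2:ℝ)⁻¹ ^ binTau x) ∧
    (∀ l, 0 < l → l < binTau x → binDigit l (TOdo x) = 1) ∧
    binDigit (binTau x) (TOdo x) = 0 ∧
    (∀ l, binTau x < l → binDigit l (TOdo x) = binDigit l x) := by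
  obtain ⟨ht, hd, hz⟩ := tau_spec x h0 h1
  obtain ⟨hx1, hx2⟩ := x_bounds x h0 h1
  set t := binTau x with htdef
  have hTeq := T_eq x
  rw [← htdef] at hTeq
  have hpowt : (2:ℝ)⁻¹ ^ (t - 1) = 2 * (2:ℝ)⁻¹ ^ t := by
    have h' : (2:ℝ)⁻¹ ^ t = (2:ℝ)⁻¹ ^ (t-1) * 2⁻¹ := by
      rw [← pow_succ]; congr 1; omega
    rw [h']; ring
  have hb1 : 1 - (2:ℝ)⁻¹ ^ (t - 1) ≤ TOdo x := by rw [hTeq]; linarith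
  have hb2 : TOdo x < 1 - (2:ℝ)⁻¹ ^ t := by rw [hTeq]; linarith
  refine ⟨⟨hb1, hb2⟩, ?_, ?_, ?_⟩
  · -- low digits become 1
    intro l hl hlt
    have hfl : ⌊TOdo x * 2 ^ l⌋ = 2 ^ l - 1 := by
      rw [Int.floor_eq_iff]
      have hple : (2:ℝ) ^ l * (2:ℝ)⁻¹ ^ (t-1) ≤ 1 := by
        rw [inv_pow, ← div_eq_mul_inv, div_le_one (by positivity)]
        exact pow_le_pow_right₀ (by norm_num : (1:ℝ) ≤ 2) (by omega : l ≤ t - 1)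
      have hp0 : (0:ℝ) < (2:ℝ)⁻¹ ^ t := by positivity
      have h2l : (0:ℝ) < 2 ^ l := by positivity
      constructor
      · push_cast
        nlinarith [hb1, h2l]
      · push_cast
        have : TOdo x < 1 := by linarith
        nlinarith [this, h2l]
    unfold binDigit
    rw [hfl]
    have : (2:ℤ)^l = 2 * 2^(l-1) := by rw [← pow_succ']; congr 1; omega
    omega
  · -- digit t becomes 0
    have key : TOdo x * 2 ^ t = x * 2 ^ t + (((2:ℤ) ^ t - 3) : ℤ) := by
      rw [hTeq, hpowt]
      have h1' : (2:ℝ)⁻¹ ^ t * 2 ^ t = 1 := by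
        rw [inv_pow]; field_simp
      push_cast
      nlinarith [h1']
    unfold binDigit at hd ⊢
    rw [key, Int.floor_add_intCast]
    have : (2:ℤ)^t = 2 * 2^(t-1) := by rw [← pow_succ']; congr 1; omega
    omega
  · -- higher digits unchanged
    intro l hlt
    have hid : (2:ℝ) ^ (l - t) * 2 ^ t = 2 ^ l := by
      rw [← pow_add]; congr 1; omega
    have key : TOdo x * 2 ^ l = x * 2 ^ l + (((2:ℤ) ^ l - 3 * 2 ^ (l - t)) : ℤ) := by
      rw [hTeq, hpowt]
      have h1' : (2:ℝ)⁻¹ ^ t * 2 ^ l = 2 ^ (l - t) := by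
        rw [inv_pow]
        rw [inv_mul_eq_div, eq_comm, eq_div_iff (by positivity)]
        exact hid
      push_cast
      nlinarith [h1']
    unfold binDigit
    rw [key, Int.floor_add_intCast]
    have e1 : (2:ℤ)^l = 2 * 2^(l-1) := by rw [← pow_succ']; congr 1; omega
    have e2 : (2:ℤ)^(l-t) = 2 * 2^(l-t-1) := by rw [← pow_succ']; congr 1; omega
    omega

lemma T_mem (x : ℝ) (h0 : 0 < x) (h1 : x < 1) : 0 ≤ TOdo x ∧ TOdo x < 1 := by
  obtain ⟨⟨hb1, hb2⟩, _, _, _⟩ := T_step x h0 h1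
  have h2 : (2:ℝ)⁻¹ ^ (binTau x - 1) ≤ 1 := by
    apply pow_le_one₀ <;> norm_num
  have h3 : (0:ℝ) < (2:ℝ)⁻¹ ^ binTau x := by positivity
  exact ⟨by linarith, by linarith⟩

lemma sum_pow2 (n : ℕ) : ∑ l ∈ Finset.range n, 2 ^ l = 2 ^ n - 1 := by
  induction n with
  | zero => simp
  | succ n ih => rw [Finset.sum_range_succ, ih]; have : 1 ≤ 2^n := Nat.one_le_two_pow; omega

lemma vfun_lt (n : ℕ) (r : ℝ) : vfun n r < 2 ^ n := by
  have h : vfun n r ≤ ∑ l ∈ Finset.range n, 2 ^ l := by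
    apply Finset.sum_le_sum
    intro l _
    have := digit01 (l+1) r
    have h1 : (binDigit (l+1) r).toNat ≤ 1 := by rcases this with h|h <;> simp [h]
    calc (binDigit (l+1) r).toNat * 2 ^ l ≤ 1 * 2 ^ l := Nat.mul_le_mul_right _ h1
      _ = 2 ^ l := one_mul _
  rw [sum_pow2] at h
  have : 1 ≤ 2^n := Nat.one_le_two_pow
  omega

lemma vfun_zero_iff (n : ℕ) (x : ℝ) (h0 : 0 ≤ x) (h1 : x < 1) :
    vfun n x = 0 ↔ x < (2:ℝ)⁻¹ ^ n := by
  constructor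
  · intro hv
    have hall : ∀ l, 0 < l → l ≤ n → binDigit l x = 0 := by
      intro l hl hln
      have hmem := (Finset.sum_eq_zero_iff).1 hv (l-1) (Finset.mem_range.2 (by omega))
      have hll : l - 1 + 1 = l := by omega
      rw [hll] at hmem
      have h2 : 0 < 2 ^ (l-1) := (by positivity)
      have h3 : (binDigit l x).toNat = 0 := by
        rcases Nat.mul_eq_zero.1 hmem with h|h
        · exact h
        · omega
      rcases digit01 l x with h|h
      · exact h
      · rw [h] at h3; norm_num at h3
    have := floor_zero x h0 h1 n hall
    have hub : x * 2 ^ n < 1 := by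
      have h' := Int.lt_floor_add_one (x * 2 ^ n); rw [this] at h'; simpa using h'
    rw [inv_pow, inv_eq_one_div, lt_div_iff₀ (by positivity)]
    linarith
  · intro hx
    apply Finset.sum_eq_zero
    intro l hl
    rw [Finset.mem_range] at hl
    have hfl : ⌊x * 2 ^ (l+1)⌋ = 0 := by
      rw [Int.floor_eq_iff]
      constructor
      · push_cast; positivity
      · push_cast
        have hle : (2:ℝ) ^ (l+1) ≤ 2 ^ n := pow_le_pow_right₀ (by norm_num) (by omega)
        have e : (2:ℝ)⁻¹^n * 2^n = 1 := by rw [inv_pow]; field_simp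
        have b1 : x * 2^(l+1) ≤ x * 2^n := mul_le_mul_of_nonneg_left hle h0
        have b2 : x * 2^n < (2:ℝ)⁻¹^n * 2^n := mul_lt_mul_of_pos_right hx (by positivity)
        linarith
    unfold binDigit
    rw [hfl]
    simp

lemma vfun_T (n : ℕ) (x : ℝ) (h0 : 0 < x) (h1 : x < 1) :
    (vfun n x = 0 ∧ vfun n (TOdo x) = 2 ^ n - 1) ∨
    (0 < vfun n x ∧ vfun n (TOdo x) = vfun n x - 1) := by
  obtain ⟨ht, hd, hz⟩ := tau_spec x h0 h1
  obtain ⟨_, hlow, hmid, hhigh⟩ := T_step x h0 h1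
  set t := binTau x with htdef
  by_cases hcase : n < t
  · -- all first n digits of x are 0, of Tx are 1
    left
    constructor
    · apply Finset.sum_eq_zero
      intro l hl
      rw [Finset.mem_range] at hl
      rw [hz (l+1) (by omega) (by omega)]
      simp
    · have : ∀ l ∈ Finset.range n, (binDigit (l+1) (TOdo x)).toNat * 2 ^ l = 2 ^ l := by
        intro l hl
        rw [Finset.mem_range] at hl
        rw [hlow (l+1) (by omega) (by omega)]
        simp
      unfold vfun
      rw [Finset.sum_congr rfl this, sum_pow2]
  · -- t ≤ n
    right
    push_neg at hcase
    have hsplit : ∀ (r : ℝ), ∑ l ∈ Finset.range n, (binDigit (l+1) r).toNat * 2 ^ l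
        = (∑ l ∈ Finset.range t, (binDigit (l+1) r).toNat * 2 ^ l)
          + ∑ l ∈ Finset.Ico t n, (binDigit (l+1) r).toNat * 2 ^ l := by
      intro r
      rw [Finset.range_eq_Ico, ← Finset.sum_Ico_consecutive _ (Nat.zero_le t) hcase,
        ← Finset.range_eq_Ico]
    have hxlow : ∑ l ∈ Finset.range t, (binDigit (l+1) x).toNat * 2 ^ l = 2 ^ (t-1) := by
      have he : t = (t-1) + 1 := by omega
      rw [he, Finset.sum_range_succ]
      have hz' : ∀ l ∈ Finset.range (t-1), (binDigit (l+1) x).toNat * 2 ^ l = 0 := by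
        intro l hl
        rw [Finset.mem_range] at hl
        rw [hz (l+1) (by omega) (by omega)]
        simp
      rw [Finset.sum_eq_zero hz']
      rw [← he, hd]
      simp
    have hTlow : ∑ l ∈ Finset.range t, (binDigit (l+1) (TOdo x)).toNat * 2 ^ l
        = 2 ^ (t-1) - 1 := by
      have he : t = (t-1) + 1 := by omega
      rw [he, Finset.sum_range_succ]
      have h1' : ∀ l ∈ Finset.range (t-1), (binDigit (l+1) (TOdo x)).toNat * 2 ^ l = 2 ^ l := by
        intro l hl
        rw [Finset.mem_range] at hl
        rw [hlow (l+1) (by omega) (by omega)]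
        simp
      rw [Finset.sum_congr rfl h1', sum_pow2, ← he, hmid]
      simp
    have hhi : ∑ l ∈ Finset.Ico t n, (binDigit (l+1) (TOdo x)).toNat * 2 ^ l
        = ∑ l ∈ Finset.Ico t n, (binDigit (l+1) x).toNat * 2 ^ l := by
      apply Finset.sum_congr rfl
      intro l hl
      rw [Finset.mem_Ico] at hl
      rw [hhigh (l+1) (by omega)]
    have e1 : vfun n x = 2 ^ (t-1) + ∑ l ∈ Finset.Ico t n, (binDigit (l+1) x).toNat * 2 ^ l := by
      unfold vfun; rw [hsplit, hxlow]
    have e2 : vfun n (TOdo x) = 2 ^ (t-1) - 1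
        + ∑ l ∈ Finset.Ico t n, (binDigit (l+1) x).toNat * 2 ^ l := by
      unfold vfun; rw [hsplit, hTlow, hhi]
    have hp : 0 < 2 ^ (t-1) := (by positivity)
    omega

lemma vfun_fiber : ∀ n : ℕ, ∀ j : ℕ, j < 2 ^ n → ∃ k : ℕ, k < 2 ^ n ∧
    ∀ r : ℝ, 0 ≤ r → r < 1 → (vfun n r = j ↔ ⌊r * 2 ^ n⌋ = (k : ℤ)) := by
  intro n
  induction n with
  | zero =>
    intro j hj
    interval_cases j
    refine ⟨0, by norm_num, fun r h0 h1 => ?_⟩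
    simp only [vfun, Finset.range_zero, Finset.sum_empty, pow_zero, mul_one]
    rw [Int.floor_eq_iff] <;> simp [h0, h1]
  | succ n ih =>
    intro j hj
    obtain ⟨b, j', hb3, hj'lt, hjsplit⟩ : ∃ b j', (b = 0 ∧ b * 2^n = 0 ∨ b = 1 ∧ b * 2^n = 2^n)
        ∧ j' < 2 ^ n ∧ j = j' + b * 2 ^ n := by
      refine ⟨j / 2^n, j % 2^n, ?_, Nat.mod_lt _ ((by positivity)), ?_⟩
      · have : j / 2^n ≤ 1 := by
          rw [Nat.div_le_iff_le_mul_add_pred (show 0 < 2^n by positivity)]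
          rw [pow_succ] at hj
          omega
        interval_cases (j / 2^n) <;> simp
      · exact (Nat.mod_add_div' j (2^n)).symm
    obtain ⟨k', hk'lt, hk'⟩ := ih j' hj'lt
    refine ⟨2 * k' + b, by rw [pow_succ]; omega, fun r h0 h1 => ?_⟩
    have hvsucc : vfun (n+1) r = vfun n r + (binDigit (n+1) r).toNat * 2 ^ n := by
      unfold vfun; rw [Finset.sum_range_succ]
    have hvlt := vfun_lt n r
    set a := ⌊r * 2 ^ n⌋ with ha
    set c := ⌊r * 2 ^ (n+1)⌋ with hc
    have hdig : binDigit (n+1) r = c % 2 := by rw [binDigit, hc]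
    have hd01 : c % 2 = 0 ∨ c % 2 = 1 := by
      have := digit01 (n+1) r; rw [hdig] at this; exact this
    have hdd : ((binDigit (n+1) r).toNat = 0 ∧ (binDigit (n+1) r).toNat * 2^n = 0) ∨
        ((binDigit (n+1) r).toNat = 1 ∧ (binDigit (n+1) r).toNat * 2^n = 2^n) := by
      rw [hdig]
      rcases hd01 with h|h <;> rw [h] <;> simp
    have hdouble : 2 * a ≤ c ∧ c < 2 * a + 2 := by
      have e : r * 2 ^ (n+1) = (r * 2 ^ n) * 2 := by rw [pow_succ]; ring
      constructor
      · rw [hc, e, Int.le_floor]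
        push_cast
        have := Int.floor_le (r * 2 ^ n)
        linarith
      · rw [hc, e]
        have h2 : (r * 2^n) * 2 < ((2*a+2 : ℤ) : ℝ) := by
          have := Int.lt_floor_add_one (r * 2 ^ n)
          push_cast
          linarith
        have := Int.floor_lt.2 h2
        omega
    constructor
    · intro hv
      rw [hvsucc] at hv
      have hv' : vfun n r = j' ∧ (binDigit (n+1) r).toNat = b := by omega
      have h1' := (hk' r h0 h1).1 hv'.1
      have h2' : c % 2 = (b : ℤ) := by
        have := hv'.2
        rw [hdig] at this
        omega
      push_cast
      omega
    · intro hfl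
      push_cast at hfl
      have haval : a = (k' : ℤ) := by omega
      have hv1 : vfun n r = j' := (hk' r h0 h1).2 haval
      have hv2 : (binDigit (n+1) r).toNat = b := by
        rw [hdig]
        omega
      rw [hvsucc, hv1, hv2]
      omega

lemma digit_fract (l : ℕ) (hl : 0 < l) (x : ℝ) :
    binDigit l x = binDigit l (Int.fract x) := by
  unfold binDigit
  have e : x * 2 ^ l = Int.fract x * 2 ^ l + ((⌊x⌋ * 2^l : ℤ) : ℝ) := by
    rw [Int.fract]
    push_cast
    ring
  rw [e, Int.floor_add_intCast]
  have hdvd : (2:ℤ) ∣ ⌊x⌋ * 2^l := Dvd.dvd.mul_left (dvd_pow_self 2 (by omega)) ⌊x⌋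
  have h0 : (⌊x⌋ * 2^l) % 2 = 0 := Int.emod_eq_zero_of_dvd hdvd
  omega

lemma tau_fract (x : ℝ) : binTau x = binTau (Int.fract x) := by
  unfold binTau
  congr 1
  ext l
  simp only [Set.mem_setOf_eq]
  constructor
  · rintro ⟨hl, hd⟩; exact ⟨hl, by rw [← digit_fract l hl]; exact hd⟩
  · rintro ⟨hl, hd⟩; exact ⟨hl, by rw [digit_fract l hl]; exact hd⟩

lemma T_fract (x : ℝ) : TOdo x = (⌊x⌋ : ℝ) + TOdo (Int.fract x) := by
  unfold TOdo
  rw [← tau_fract]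
  have : Int.fract x = x - ⌊x⌋ := rfl
  rw [this]
  ring

lemma tau_int (x : ℝ) (hx : Int.fract x = 0) : binTau x = 0 := by
  rw [tau_fract, hx]
  unfold binTau
  convert Nat.sInf_empty
  rw [Set.eq_empty_iff_forall_notMem]
  rintro l ⟨hl, hd⟩
  unfold binDigit at hd
  norm_num at hd

lemma T_neg (x : ℝ) (hx : x < 0) : TOdo x < 0 := by
  have hfx : ⌊x⌋ ≤ -1 := by
    have h' : (⌊x⌋:ℝ) ≤ x := Int.floor_le x
    have : ⌊x⌋ < 0 := by exact_mod_cast lt_of_le_of_lt h' hx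
    omega
  by_cases h : Int.fract x = 0
  · have ht := tau_int x h
    unfold TOdo
    rw [ht]
    norm_num
    linarith
  · have h1 : 0 < Int.fract x := lt_of_le_of_ne (Int.fract_nonneg x) (Ne.symm h)
    have h2 : Int.fract x < 1 := Int.fract_lt_one x
    have := (T_mem _ h1 h2).2
    rw [T_fract x]
    have : (⌊x⌋ : ℝ) ≤ -1 := by exact_mod_cast hfx
    linarith [(T_mem _ h1 h2).2]

lemma T_neg_iter (m : ℕ) (x : ℝ) (hx : x < 0) : TOdo^[m] x < 0 := by
  induction m generalizing x with
  | zero => simpa using hx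
  | succ m ih => rw [Function.iterate_succ_apply]; exact ih _ (T_neg x hx)

lemma vfun_zero' (n : ℕ) : vfun n 0 = 0 := by
  apply Finset.sum_eq_zero
  intro l _
  unfold binDigit
  norm_num

lemma T_zero : TOdo 0 = -1 := by
  have h : binTau 0 = 0 := tau_int 0 (by simp)
  unfold TOdo
  rw [h]
  norm_num

lemma orbit (n : ℕ) : ∀ j, j < 2 ^ n → ∀ r : ℝ, 0 ≤ r → r < 1 →
    (TOdo^[j] r ∈ Set.Ico (0:ℝ) ((2:ℝ)⁻¹ ^ n) ↔ vfun n r = j) := by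
  intro j
  induction j with
  | zero =>
    intro _ r h0 h1
    simp only [Function.iterate_zero, id_eq, Set.mem_Ico]
    rw [vfun_zero_iff n r h0 h1]
    exact ⟨fun h => h.2, fun h => ⟨h0, h⟩⟩
  | succ j ih =>
    intro hj r h0 h1
    rw [Function.iterate_succ_apply]
    rcases eq_or_lt_of_le h0 with heq | hpos
    · -- r = 0
      rw [← heq, T_zero]
      have hneg := T_neg_iter j (-1) (by norm_num)
      constructor
      · intro hmem
        exact absurd hmem.1 (by linarith)
      · intro hv
        rw [vfun_zero'] at hv
        exact absurd hv.symm (by omega)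
    · have ⟨hT0, hT1⟩ := T_mem r hpos h1
      rw [ih (by omega) (TOdo r) hT0 hT1]
      have h2n : 1 ≤ 2^n := Nat.one_le_two_pow
      rcases vfun_T n r hpos h1 with ⟨hv0, hvT⟩ | ⟨hvpos, hvT⟩
      · rw [hvT, hv0]
        constructor <;> intro h <;> omega
      · rw [hvT]
        constructor <;> intro h <;> omega

lemma Jset_eq (i j : ℕ) (hj : j < 2 ^ (2*i+1)) :
    ∃ k : ℕ, k < 2 ^ (2*i+1) ∧
      Jset i j = Set.Ico ((k:ℝ)/2^(2*i+1)) (((k:ℝ)+1)/2^(2*i+1)) := by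
  obtain ⟨k, hk, hiff⟩ := vfun_fiber (2*i+1) j hj
  have h2n : (0:ℝ) < 2^(2*i+1) := by positivity
  have hkle : (k:ℝ) + 1 ≤ 2^(2*i+1) := by exact_mod_cast Nat.succ_le_of_lt hk
  refine ⟨k, hk, ?_⟩
  ext r
  simp only [Jset, Set.mem_inter_iff, Set.mem_Ico, Set.mem_preimage]
  constructor
  · rintro ⟨⟨h0, h1⟩, hmem⟩
    have hv : vfun (2*i+1) r = j := (orbit (2*i+1) j hj r h0 h1).1 hmem
    have hfl := (hiff r h0 h1).1 hv
    have hle : ((k:ℤ):ℝ) ≤ r * 2^(2*i+1) := by rw [← hfl]; exact Int.floor_le _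
    have hlt : r * 2^(2*i+1) < (k:ℝ) + 1 := by
      have := Int.lt_floor_add_one (r * 2^(2*i+1))
      rw [hfl] at this
      push_cast at this
      linarith
    push_cast at hle
    constructor
    · rw [div_le_iff₀ h2n]; linarith
    · rw [lt_div_iff₀ h2n]; linarith
  · rintro ⟨hlo, hhi⟩
    have h0 : 0 ≤ r := le_trans (by positivity) hlo
    have h1 : r < 1 := by
      have := lt_of_lt_of_le hhi (by rw [div_le_one h2n]; exact hkle)
      exact this
    have hfl : ⌊r * 2^(2*i+1)⌋ = (k:ℤ) := by
      rw [Int.floor_eq_iff]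
      rw [div_le_iff₀ h2n] at hlo
      rw [lt_div_iff₀ h2n] at hhi
      constructor
      · push_cast; linarith
      · push_cast; linarith
    have hv := (hiff r h0 h1).2 hfl
    exact ⟨⟨h0, h1⟩, (orbit (2*i+1) j hj r h0 h1).2 hv⟩

lemma Jset_volume (i j : ℕ) (hj : j < 2 ^ (2*i+1)) :
    volume (Jset i j) = (2:ENNReal)⁻¹ ^ (2*i+1) := by
  obtain ⟨k, hk, heq⟩ := Jset_eq i j hj
  rw [heq, Real.volume_Ico]
  have h2n : (0:ℝ) < 2^(2*i+1) := by positivity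
  have e : ((k:ℝ)+1)/2^(2*i+1) - (k:ℝ)/2^(2*i+1) = (2:ℝ)⁻¹^(2*i+1) := by
    rw [inv_pow]
    field_simp
    ring
  rw [e]
  rw [ENNReal.ofReal_pow (by norm_num)]
  congr 1
  rw [ENNReal.ofReal_inv_of_pos (by norm_num)]
  norm_num

lemma Jset_measurable (i j : ℕ) (hj : j < 2 ^ (2*i+1)) : MeasurableSet (Jset i j) := by
  obtain ⟨k, _, heq⟩ := Jset_eq i j hj
  rw [heq]
  exact measurableSet_Ico

lemma Jset_pd (i : ℕ) :
    Set.PairwiseDisjoint (Finset.range (2 ^ (2*i+1)) : Set ℕ) (fun j => Jset i j) := by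
  intro j hj j' hj' hne
  simp only [Finset.coe_range, Set.mem_Iio] at hj hj'
  rw [Function.onFun, Set.disjoint_left]
  intro r hr hr'
  apply hne
  obtain ⟨⟨h0, h1⟩, hm⟩ := hr
  obtain ⟨-, hm'⟩ := hr'
  have e1 := (orbit (2*i+1) j hj r h0 h1).1 hm
  have e2 := (orbit (2*i+1) j' hj' r h0 h1).1 hm'
  omega

theorem stmt_13 (i : ℕ) (hi : 1 ≤ i) :
    Set.PairwiseDisjoint (Finset.range (2 ^ i) : Set ℕ) (fun j => Jset i j) ∧
    volume (Aset i) = (2 : ENNReal)⁻¹ ^ (i + 2) ∧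
    volume (Bset i) = (2 : ENNReal)⁻¹ ^ (i + 2) := by
  obtain ⟨i', rfl⟩ : ∃ i', i = i' + 1 := ⟨i - 1, by omega⟩
  set i := i' + 1
  have hpow : (2:ℕ) ^ i ≤ 2 ^ (2*i+1) := Nat.pow_le_pow_right (by norm_num) (by omega)
  have hpd : Set.PairwiseDisjoint (Finset.range (2 ^ i) : Set ℕ) (fun j => Jset i j) := by
    apply (Jset_pd i).subset
    intro j hj
    simp only [Finset.coe_range, Set.mem_Iio] at hj ⊢
    omega
  have key : ∀ s : Finset ℕ, (↑s ⊆ (Finset.range (2^i) : Set ℕ)) → s.card = 2^i' →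
      volume (⋃ j ∈ s, Jset i j) = (2:ENNReal)⁻¹ ^ (i + 2) := by
    intro s hs hcard
    have hmem : ∀ j ∈ s, j < 2^(2*i+1) := by
      intro j hj
      have := hs hj
      simp only [Finset.coe_range, Set.mem_Iio] at this
      omega
    rw [measure_biUnion_finset (hpd.subset hs) (fun j hj => Jset_measurable i j (hmem j hj))]
    rw [Finset.sum_congr rfl (fun j hj => Jset_volume i j (hmem j hj))]
    rw [Finset.sum_const, hcard, nsmul_eq_mul]
    have e1 : 2*i+1 = i' + (i + 2) := by omega
    rw [e1, pow_add]
    have e2 : ((2^i' : ℕ) : ENNReal) * (2:ENNReal)⁻¹ ^ i' = 1 := by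
      push_cast
      rw [← mul_pow]
      rw [ENNReal.mul_inv_cancel (by norm_num) (by norm_num)]
      exact one_pow _
    rw [← mul_assoc, e2, one_mul]
  refine ⟨hpd, ?_, ?_⟩
  · show volume (⋃ j ∈ Finset.range (2 ^ i'), Jset i j) = _
    apply key
    · intro j hj
      simp only [Finset.coe_range, Set.mem_Iio] at hj ⊢
      have : (2:ℕ)^i' ≤ 2^i := Nat.pow_le_pow_right (by norm_num) (by omega)
      omega
    · exact Finset.card_range _
  · show volume (⋃ j ∈ Finset.Ico (2^i') (2^i), Jset i j) = _
    apply key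
    · intro j hj
      simp only [Finset.coe_Ico, Set.mem_Ico, Finset.coe_range, Set.mem_Iio] at hj ⊢
      exact hj.2
    · rw [Nat.card_Ico]
      show 2^(i'+1) - 2^i' = 2^i'
      rw [pow_succ]
      omega
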